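/- Under the transient-state structure, let Q̂ ∈ ℝ^{m×m} be a generator partitioned as [[Q̂^{11}, Q̂^{12}],[Q̂^{21}, Q̂^{22}]] with Q̂^{11} ∈ ℝ^{(m−m_*)×(m−m_*)}, and for each k = 1,…,l let μ^k be a row vector with nonnegative entries summing to 1 satisfying μ^k Q̃^k = 0. Then the matrix Q̄_* = diag(μ^1,…,μ^l)(Q̂^{11} 𝟙̃ + Q̂^{12}(a_{m_1},…,a_{m_l})) ∈ ℝ^{l×l}, where 𝟙̃ = diag(𝟙_{m_1},…,𝟙_{m_l}), is a generator. -/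

import Mathlib

set_option maxHeartbeats 1000000

open MeasureTheory Filter
open scoped BigOperators Topology

/-- `Q` is the generator matrix of a continuous-time Markov chain:
off-diagonal entries are nonnegative and each row sums to zero. -/
def IsGenerator {S : Type*} [Fintype S] (Q : Matrix S S ℝ) : Prop :=
  (∀ i j, i ≠ j → 0 ≤ Q i j) ∧ ∀ i, ∑ j, Q i j = 0

/-- `f : [0,T] × S → ℝ` is bounded and measurable (in time, for each state). -/
def BddMeasOn {S : Type*} [Fintype S] (T : ℝ) (f : ℝ → S → ℝ) : Prop :=
  (∀ i, Measurable fun t => f t i) ∧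
    ∃ C : ℝ, ∀ t ∈ Set.Icc (0:ℝ) T, ∀ i, |f t i| ≤ C

/-- `P` is a solution of the P-system associated with `(ρ, r, Q)` on `[0,T]`:
`P` is continuous on `[0,T]` and
`P(t,i) = 1 - ∫_t^T [P(s,i)(ρ(s,i) - 2 r(s,i)) - Σ_j q_{ij} P(s,j)] ds`. -/
def IsPSol {S : Type*} [Fintype S] (T : ℝ) (Q : Matrix S S ℝ)
    (ρ r : ℝ → S → ℝ) (P : ℝ → S → ℝ) : Prop :=
  (∀ i, ContinuousOn (fun t => P t i) (Set.Icc 0 T)) ∧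
    ∀ t ∈ Set.Icc (0:ℝ) T, ∀ i,
      P t i = 1 - ∫ s in t..T, (P s i * (ρ s i - 2 * r s i) - ∑ j, Q i j * P s j)

/-- `H` is a solution of the H-system associated with `(r, Q, P)` on `[0,T]`:
`H` is continuous on `[0,T]` and
`H(t,i) = 1 - ∫_t^T [H(s,i) r(s,i) - (1/P(s,i)) Σ_j q_{ij} P(s,j) H(s,j)
  + (H(s,i)/P(s,i)) Σ_j q_{ij} P(s,j)] ds`. -/
def IsHSol {S : Type*} [Fintype S] (T : ℝ) (Q : Matrix S S ℝ)
    (r : ℝ → S → ℝ) (P : ℝ → S → ℝ) (H : ℝ → S → ℝ) : Prop :=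
  (∀ i, ContinuousOn (fun t => H t i) (Set.Icc 0 T)) ∧
    ∀ t ∈ Set.Icc (0:ℝ) T, ∀ i,
      H t i = 1 - ∫ s in t..T,
        (H s i * r s i - (1 / P s i) * ∑ j, Q i j * P s j * H s j
          + (H s i / P s i) * ∑ j, Q i j * P s j)

/-- The kernel of `Q`, acting on column vectors, is spanned by the all-ones vector. -/
def KerSpannedByOnes {S : Type*} [Fintype S] (Q : Matrix S S ℝ) : Prop :=
  ∀ v : S → ℝ, Q.mulVec v = 0 → ∃ c : ℝ, ∀ j, v j = c

/-- `A` is Hurwitz: every (complex) eigenvalue of `A` has negative real part. -/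
def IsHurwitz {n : ℕ} (A : Matrix (Fin n) (Fin n) ℝ) : Prop :=
  ∀ z : ℂ, z ∈ spectrum ℂ (A.map Complex.ofReal) → z.re < 0

/-- For the transient-state structure (states `(Σ k, Fin (m_k)) ⊕ Fin m_*`, with
`Q̃_*` the transient-transient block and `Q̃^k_*` the transient-to-block-`k` block
of `Q̃`), the vector `a_{m_k} = -Q̃_*⁻¹ Q̃^k_* 𝟙_{m_k} ∈ ℝ^{m_*}`. -/
noncomputable def aVec (l : ℕ) (mk : Fin l → ℕ) (ms : ℕ)
    (Qt : Matrix ((Σ k : Fin l, Fin (mk k)) ⊕ Fin ms)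
      ((Σ k : Fin l, Fin (mk k)) ⊕ Fin ms) ℝ) (k : Fin l) : Fin ms → ℝ :=
  -((Matrix.of fun i j : Fin ms => Qt (Sum.inr i) (Sum.inr j))⁻¹.mulVec
      fun j => ∑ i : Fin (mk k), Qt (Sum.inr j) (Sum.inl ⟨k, i⟩))

section AuxLemmas

open Matrix

/-- Minimum principle: if `B` has nonnegative off-diagonal entries and strictly
negative row sums, and `B x ≤ 0` entrywise, then `x ≥ 0` entrywise. -/
lemma minPrinciple {n : Type*} [Fintype n] (B : Matrix n n ℝ)
    (hoff : ∀ i j, i ≠ j → 0 ≤ B i j) (hrow : ∀ i, ∑ j, B i j < 0)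
    (x : n → ℝ) (hx : ∀ i, B.mulVec x i ≤ 0) : ∀ i, 0 ≤ x i := by
  by_contra hc
  push_neg at hc
  obtain ⟨i1, hi1⟩ := hc
  obtain ⟨i0, -, hi0⟩ := Finset.exists_min_image (Finset.univ : Finset n) x
    ⟨i1, Finset.mem_univ i1⟩
  have hxi0 : x i0 < 0 := lt_of_le_of_lt (hi0 i1 (Finset.mem_univ i1)) hi1
  have hmv : B.mulVec x i0 = ∑ j, B i0 j * x j := by
    simp [Matrix.mulVec, dotProduct]
  have key : (∑ j, B i0 j) * x i0 ≤ B.mulVec x i0 := by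
    rw [hmv, Finset.sum_mul]
    refine Finset.sum_le_sum fun j _ => ?_
    rcases eq_or_ne j i0 with rfl | hj
    · exact le_rfl
    · exact mul_le_mul_of_nonneg_left (hi0 j (Finset.mem_univ j)) (hoff i0 j hj.symm)
  have hpos : 0 < (∑ j, B i0 j) * x i0 := mul_pos_of_neg_of_neg (hrow i0) hxi0
  linarith [hx i0]

lemma det_ne_zero_of_strict {n : Type*} [Fintype n] [DecidableEq n] (B : Matrix n n ℝ)
    (hoff : ∀ i j, i ≠ j → 0 ≤ B i j) (hrow : ∀ i, ∑ j, B i j < 0) : B.det ≠ 0 := by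
  intro hdet
  obtain ⟨v, hv, hBv⟩ := Matrix.exists_mulVec_eq_zero_iff.mpr hdet
  have h1 := minPrinciple B hoff hrow v (fun i => by rw [hBv]; exact le_rfl)
  have h2 := minPrinciple B hoff hrow (-v)
    (fun i => by rw [Matrix.mulVec_neg, hBv]; simp)
  exact hv (funext fun i => le_antisymm (neg_nonneg.mp (h2 i)) (h1 i))

lemma det_ne_zero_of_isHurwitz {n : ℕ} (A : Matrix (Fin n) (Fin n) ℝ)
    (h : IsHurwitz A) : A.det ≠ 0 := by
  intro hdet
  have hd : (A.map Complex.ofReal).det = 0 := by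
    have hmap := RingHom.map_det Complex.ofRealHom A
    have : (Complex.ofRealHom.mapMatrix A : Matrix (Fin n) (Fin n) ℂ)
        = A.map Complex.ofReal := rfl
    rw [this] at hmap
    rw [← hmap, hdet]
    simp
  have h0 : (0 : ℂ) ∈ spectrum ℂ (A.map Complex.ofReal) := by
    rw [spectrum.mem_iff, map_zero, zero_sub, IsUnit.neg_iff,
      Matrix.isUnit_iff_isUnit_det, hd]
    exact not_isUnit_zero
  simpa using h 0 h0

/-- Key positivity lemma: if `B` has nonnegative off-diagonal entries, nonpositive
row sums and is Hurwitz, and `b ≥ 0`, then `-(B⁻¹ b) ≥ 0`. -/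
lemma neg_inv_mulVec_nonneg {n : ℕ} (B : Matrix (Fin n) (Fin n) ℝ)
    (hoff : ∀ i j, i ≠ j → 0 ≤ B i j) (hrow : ∀ i, ∑ j, B i j ≤ 0)
    (hH : IsHurwitz B) (b : Fin n → ℝ) (hb : ∀ i, 0 ≤ b i) (i : Fin n) :
    0 ≤ (-(B⁻¹.mulVec b)) i := by
  have hdetB : B.det ≠ 0 := det_ne_zero_of_isHurwitz B hH
  set g : ℝ → Matrix (Fin n) (Fin n) ℝ := fun ε => B - ε • 1 with hg
  have hg0 : g 0 = B := by simp [hg]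
  have hcg : Continuous g := continuous_const.sub (continuous_id.smul continuous_const)
  have hinv : ContinuousAt (fun M : Matrix (Fin n) (Fin n) ℝ => M⁻¹) B := by
    apply continuousAt_matrix_inv
    rw [Ring.inverse_eq_inv']
    exact continuousAt_inv₀ hdetB
  have h1 : ContinuousAt (fun ε => (g ε)⁻¹) 0 := by
    have hinv0 : ContinuousAt (fun M : Matrix (Fin n) (Fin n) ℝ => M⁻¹) (g 0) := by
      rw [hg0]; exact hinv
    exact hinv0.comp hcg.continuousAt
  have hmv : Continuous (fun M : Matrix (Fin n) (Fin n) ℝ => -(M.mulVec b) i) := by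
    have : Continuous (fun M : Matrix (Fin n) (Fin n) ℝ => M.mulVec b) :=
      continuous_id.matrix_mulVec continuous_const
    exact ((continuous_apply i).comp this).neg
  have hF : ContinuousAt (fun ε => (-((g ε)⁻¹.mulVec b)) i) 0 := by
    have := hmv.continuousAt.comp h1
    exact this
  have hev : ∀ ε : ℝ, 0 < ε → 0 ≤ (-((g ε)⁻¹.mulVec b)) i := by
    intro ε hε
    have hoffε : ∀ p q, p ≠ q → 0 ≤ g ε p q := by
      intro p q hpq
      have : g ε p q = B p q := by
        simp [hg, Matrix.sub_apply, Matrix.smul_apply, Matrix.one_apply_ne hpq]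
      rw [this]; exact hoff p q hpq
    have hrowε : ∀ p, ∑ q, g ε p q < 0 := by
      intro p
      have hsum : ∑ q, g ε p q = (∑ q, B p q) - ε := by
        simp [hg, Matrix.sub_apply, Matrix.smul_apply, Finset.sum_sub_distrib,
          Matrix.one_apply, Finset.mul_sum]
      rw [hsum]
      linarith [hrow p]
    have hdet : (g ε).det ≠ 0 := det_ne_zero_of_strict _ hoffε hrowε
    have hsolve : (g ε).mulVec (-((g ε)⁻¹.mulVec b)) = -b := by
      rw [Matrix.mulVec_neg, Matrix.mulVec_mulVec,
        Matrix.mul_nonsing_inv _ (isUnit_iff_ne_zero.mpr hdet), Matrix.one_mulVec]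
    refine minPrinciple (g ε) hoffε hrowε _ (fun p => ?_) i
    rw [hsolve]
    simpa using hb p
  have htend : Filter.Tendsto (fun ε => (-((g ε)⁻¹.mulVec b)) i) (nhdsWithin 0 (Set.Ioi 0))
      (nhds ((-((g 0)⁻¹.mulVec b)) i)) :=
    hF.tendsto.mono_left nhdsWithin_le_nhds
  have hlim := ge_of_tendsto htend
    (Filter.eventually_of_mem self_mem_nhdsWithin fun ε hε => hev ε hε)
  rwa [hg0] at hlim

/-- Row-sum identity for `-(A⁻¹ bₖ)` when `∑ₖ bₖ = -(row sums of A)`. -/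
lemma sum_neg_inv_mulVec {m : Type*} [Fintype m] [DecidableEq m] {ι : Type*} [Fintype ι]
    (A : Matrix m m ℝ) (hdet : IsUnit A.det) (b : ι → m → ℝ)
    (hb : ∀ i, ∑ k, b k i = -∑ j', A i j') (j : m) :
    ∑ k, (-(A⁻¹.mulVec (b k))) j = 1 := by
  have hinv : A⁻¹ * A = 1 := Matrix.nonsing_inv_mul _ hdet
  have step1 : ∑ k, (-(A⁻¹.mulVec (b k))) j = ∑ i, ∑ j', A⁻¹ j i * A i j' := by
    have e0 : ∀ k, (-(A⁻¹.mulVec (b k))) j = ∑ i, -(A⁻¹ j i * b k i) := by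
      intro k; simp [Matrix.mulVec, dotProduct]
    rw [Finset.sum_congr rfl fun k _ => e0 k, Finset.sum_comm]
    refine Finset.sum_congr rfl fun i _ => ?_
    rw [Finset.sum_neg_distrib, ← Finset.mul_sum, hb i, mul_neg, neg_neg,
      Finset.mul_sum]
  rw [step1]
  have : ∀ j', ∑ i, A⁻¹ j i * A i j' = (A⁻¹ * A) j j' := by
    intro j'; rw [Matrix.mul_apply]
  rw [Finset.sum_comm, Finset.sum_congr rfl fun j' _ => this j', hinv]
  show ∑ j', (1 : Matrix m m ℝ) j j' = 1
  simp [Matrix.one_apply]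

end AuxLemmas

/-- under the transient-state structure, with `Q̂` a generator and
`μ^k` the stationary distributions of the blocks `Q̃^k`, the matrix
`Q̄_* = diag(μ^1,…,μ^l)(Q̂^{11} 𝟙̃ + Q̂^{12}(a_{m_1},…,a_{m_l}))`, whose `(k,k')`
entry is `Σ_j μ^k_j (Σ_{j'} Q̂_{(k,j),(k',j')} + Σ_{j''} Q̂_{(k,j),*j''} a_{m_{k'},j''})`,
is a generator. -/
theorem qbar_star_is_generator
    (l : ℕ) (hl : 1 ≤ l) (mk : Fin l → ℕ) (hmk : ∀ k, 1 ≤ mk k)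
    (ms : ℕ) (hms : 1 ≤ ms)
    (Qt : Matrix ((Σ k : Fin l, Fin (mk k)) ⊕ Fin ms)
      ((Σ k : Fin l, Fin (mk k)) ⊕ Fin ms) ℝ)
    (hQtgen : IsGenerator Qt)
    (hQtUR : ∀ (p : Σ k : Fin l, Fin (mk k)) (j : Fin ms),
      Qt (Sum.inl p) (Sum.inr j) = 0)
    (hQtblock : ∀ p q : Σ k : Fin l, Fin (mk k), p.1 ≠ q.1 →
      Qt (Sum.inl p) (Sum.inl q) = 0)
    (hQtblkgen : ∀ k : Fin l, IsGenerator
      (Matrix.of fun i j : Fin (mk k) => Qt (Sum.inl ⟨k, i⟩) (Sum.inl ⟨k, j⟩)))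
    (hQtblkker : ∀ k : Fin l, KerSpannedByOnes
      (Matrix.of fun i j : Fin (mk k) => Qt (Sum.inl ⟨k, i⟩) (Sum.inl ⟨k, j⟩)))
    (hQtHurwitz : IsHurwitz
      (Matrix.of fun i j : Fin ms => Qt (Sum.inr i) (Sum.inr j)))
    (Qh : Matrix ((Σ k : Fin l, Fin (mk k)) ⊕ Fin ms)
      ((Σ k : Fin l, Fin (mk k)) ⊕ Fin ms) ℝ)
    (hQh : IsGenerator Qh)
    (μ : (k : Fin l) → Fin (mk k) → ℝ)
    (hμnonneg : ∀ k j, 0 ≤ μ k j) (hμsum : ∀ k, ∑ j, μ k j = 1)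
    (hμstat : ∀ (k : Fin l) (j' : Fin (mk k)),
      ∑ j, μ k j * Qt (Sum.inl ⟨k, j⟩) (Sum.inl ⟨k, j'⟩) = 0) :
    IsGenerator (Matrix.of fun k k' : Fin l =>
      ∑ j, μ k j *
        ((∑ j' : Fin (mk k'), Qh (Sum.inl ⟨k, j⟩) (Sum.inl ⟨k', j'⟩)) +
          ∑ j'' : Fin ms,
            Qh (Sum.inl ⟨k, j⟩) (Sum.inr j'') * aVec l mk ms Qt k' j'')) := by

  classical
  have hQs_off : ∀ i j : Fin ms, i ≠ j →
      0 ≤ (Matrix.of fun i j : Fin ms => Qt (Sum.inr i) (Sum.inr j)) i j := by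
    intro i j hij
    exact hQtgen.1 _ _ (fun h => hij (Sum.inr.inj h))
  have hQs_row : ∀ i : Fin ms,
      ∑ j, (Matrix.of fun i j : Fin ms => Qt (Sum.inr i) (Sum.inr j)) i j ≤ 0 := by
    intro i
    have h0 := hQtgen.2 (Sum.inr i)
    rw [Fintype.sum_sum_type] at h0
    have hpos : 0 ≤ ∑ q : (Σ k : Fin l, Fin (mk k)), Qt (Sum.inr i) (Sum.inl q) :=
      Finset.sum_nonneg fun q _ => hQtgen.1 _ _ (by simp)
    simp only [Matrix.of_apply]
    linarith
  have hQs_det : (Matrix.of fun i j : Fin ms => Qt (Sum.inr i) (Sum.inr j)).det ≠ 0 :=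
    det_ne_zero_of_isHurwitz _ hQtHurwitz
  -- nonnegativity of aVec
  have haVec : ∀ (k' : Fin l) (j'' : Fin ms), 0 ≤ aVec l mk ms Qt k' j'' := by
    intro k' j''
    exact neg_inv_mulVec_nonneg _ hQs_off hQs_row hQtHurwitz _
      (fun i => Finset.sum_nonneg fun p _ => hQtgen.1 _ _ (by simp)) j''
  -- aVec columns sum to one
  have hasum : ∀ j'' : Fin ms, ∑ k', aVec l mk ms Qt k' j'' = 1 := by
    intro j''
    exact sum_neg_inv_mulVec _ (isUnit_iff_ne_zero.mpr hQs_det)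
      (fun (k : Fin l) (i : Fin ms) => ∑ p : Fin (mk k), Qt (Sum.inr i) (Sum.inl ⟨k, p⟩))
      (fun i => by
        have h0 := hQtgen.2 (Sum.inr i)
        rw [Fintype.sum_sum_type] at h0
        have hsig : ∑ q : (Σ k : Fin l, Fin (mk k)), Qt (Sum.inr i) (Sum.inl q)
            = ∑ k : Fin l, ∑ p : Fin (mk k), Qt (Sum.inr i) (Sum.inl ⟨k, p⟩) := by
          rw [← Finset.univ_sigma_univ, Finset.sum_sigma]
        simp only [Matrix.of_apply]
        rw [← hsig]
        linarith) j''
  constructor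
  · -- off-diagonal nonnegativity
    intro k k' hkk'
    simp only [Matrix.of_apply]
    refine Finset.sum_nonneg fun j _ => mul_nonneg (hμnonneg k j) (add_nonneg ?_ ?_)
    · refine Finset.sum_nonneg fun j' _ => hQh.1 _ _ fun h => ?_
      exact hkk' (congrArg Sigma.fst (Sum.inl.inj h))
    · exact Finset.sum_nonneg fun j'' _ =>
        mul_nonneg (hQh.1 _ _ (by simp)) (haVec k' j'')
  · -- zero row sums
    intro k
    simp only [Matrix.of_apply]
    rw [Finset.sum_comm]
    refine Finset.sum_eq_zero fun j _ => ?_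
    rw [← Finset.mul_sum]
    have hinner : ∑ k' : Fin l,
        ((∑ j' : Fin (mk k'), Qh (Sum.inl ⟨k, j⟩) (Sum.inl ⟨k', j'⟩)) +
          ∑ j'' : Fin ms, Qh (Sum.inl ⟨k, j⟩) (Sum.inr j'') * aVec l mk ms Qt k' j'') = 0 := by
      rw [Finset.sum_add_distrib]
      have e1 : ∑ k' : Fin l, ∑ j' : Fin (mk k'), Qh (Sum.inl ⟨k, j⟩) (Sum.inl ⟨k', j'⟩)
          = ∑ q : (Σ k : Fin l, Fin (mk k)), Qh (Sum.inl ⟨k, j⟩) (Sum.inl q) := by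
        rw [← Finset.univ_sigma_univ, Finset.sum_sigma]
      have e2 : ∑ k' : Fin l, ∑ j'' : Fin ms,
            Qh (Sum.inl ⟨k, j⟩) (Sum.inr j'') * aVec l mk ms Qt k' j''
          = ∑ j'' : Fin ms, Qh (Sum.inl ⟨k, j⟩) (Sum.inr j'') := by
        rw [Finset.sum_comm]
        refine Finset.sum_congr rfl fun j'' _ => ?_
        rw [← Finset.mul_sum, hasum j'', mul_one]
      rw [e1, e2]
      have h0 := hQh.2 (Sum.inl ⟨k, j⟩)
      rw [Fintype.sum_sum_type] at h0
      exact h0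
    rw [hinner, mul_zero]
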